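/- Let b_1,...,b_m and c_1,...,c_m be 2m pairwise distinct nonzero elements of a field F of characteristic zero, and let I ⊇ {c_1,...,c_m} be a finite set of further elements distinct from all b_s. Then the m×m matrix with entries M_{s,t} = a-weighted products ∏_{ℓ∈I∖{c_t}} (b_s − ℓ) · b_s, i.e., M_{s,t} = b_s ∏_{ℓ ∈ I, ℓ ≠ c_t} (b_s − ℓ), has determinant equal to a nonzero multiple of a Cauchy determinant; in particular det M ≠ 0. -/

import Mathlib

open Finset

theorem det_M_ne_zero {F : Type*} [Field F] [CharZero F] [DecidableEq F] (m : ℕ)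
    (I : Finset F) (c : Fin m → F) (b : Fin m → F)
    (hc : Function.Injective c) (hcI : ∀ t, c t ∈ I)
    (hb : Function.Injective b) (hbI : ∀ s, b s ∉ I)
    (hb0 : ∀ s, b s ≠ 0) (hI0 : ∀ ℓ ∈ I, ℓ ≠ 0) :
    (Matrix.of fun s t : Fin m =>
        b s * ∏ ℓ ∈ I.erase (c t), (b s - ℓ)).det ≠ 0 := by
  rcases Nat.eq_zero_or_pos m with rfl | hm
  · simp [Matrix.det_isEmpty]
  intro hdet
  obtain ⟨v, hv, hmul⟩ := (Matrix.exists_mulVec_eq_zero_iff).mpr hdet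
  classical
  -- the polynomial Q
  set Q : Polynomial F :=
    ∑ t : Fin m, Polynomial.C (v t) *
      (Polynomial.X * ∏ ℓ ∈ I.erase (c t), (Polynomial.X - Polynomial.C ℓ)) with hQ
  have hQeval : ∀ x : F, Q.eval x =
      ∑ t : Fin m, v t * (x * ∏ ℓ ∈ I.erase (c t), (x - ℓ)) := by
    intro x
    simp [hQ, Polynomial.eval_finset_sum, Polynomial.eval_prod]
  -- card I ≥ 1
  have hcmem : c ⟨0, hm⟩ ∈ I := hcI _
  have hIpos : 1 ≤ I.card := Finset.card_pos.mpr ⟨_, hcmem⟩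
  -- degree bound
  have hdeg : Q.natDegree ≤ I.card := by
    refine (Polynomial.natDegree_sum_le _ _).trans ?_
    rw [Finset.fold_max_le]
    refine ⟨Nat.zero_le _, fun t _ => ?_⟩
    refine (Polynomial.natDegree_mul_le).trans ?_
    simp only [Polynomial.natDegree_C, Nat.zero_add]
    refine (Polynomial.natDegree_mul_le).trans ?_
    have h1 : (∏ ℓ ∈ I.erase (c t), (Polynomial.X - Polynomial.C ℓ)).natDegree
        ≤ (I.erase (c t)).card := by
      refine (Polynomial.natDegree_prod_le _ _).trans ?_
      refine (Finset.sum_le_card_nsmul _ _ 1 fun ℓ _ => ?_).trans (by simp)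
      exact (Polynomial.natDegree_X_sub_C ℓ).le
    have h2 : (I.erase (c t)).card = I.card - 1 := Finset.card_erase_of_mem (hcI t)
    have := Polynomial.natDegree_X (R := F)
    omega
  -- the root set
  set S : Finset F := insert (0 : F) ((Finset.univ.image b) ∪ (I \ Finset.univ.image c))
     with hS
  have hScard : I.card + 1 ≤ S.card := by
    have h0 : (0 : F) ∉ (Finset.univ.image b) ∪ (I \ Finset.univ.image c) := by
      simp only [Finset.mem_union, Finset.mem_image, Finset.mem_sdiff, not_or]
      constructor
      · rintro ⟨s, -, hs⟩; exact hb0 s hs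
      · rintro ⟨hI, -⟩; exact hI0 0 hI rfl
    have hdisj : Disjoint (Finset.univ.image b) (I \ Finset.univ.image c) := by
      rw [Finset.disjoint_left]
      rintro x hx hx'
      simp only [Finset.mem_image, Finset.mem_univ, true_and] at hx
      obtain ⟨s, rfl⟩ := hx
      exact hbI s (Finset.mem_sdiff.mp hx').1
    rw [hS, Finset.card_insert_of_notMem h0, Finset.card_union_of_disjoint hdisj]
    have hcimg : Finset.univ.image c ⊆ I := by
      intro x hx
      simp only [Finset.mem_image, Finset.mem_univ, true_and] at hx
      obtain ⟨t, rfl⟩ := hx; exact hcI t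
    rw [Finset.card_sdiff_of_subset hcimg, Finset.card_image_of_injective _ hb,
      Finset.card_image_of_injective _ hc]
    simp only [Finset.card_univ, Fintype.card_fin]
    have : m ≤ I.card := by
      calc m = (Finset.univ.image c).card := by
              rw [Finset.card_image_of_injective _ hc]; simp
        _ ≤ I.card := Finset.card_le_card hcimg
    omega
  -- every element of S is a root
  have hroot : ∀ x ∈ S, Q.eval x = 0 := by
    intro x hx
    rw [hQeval]
    rw [hS, Finset.mem_insert, Finset.mem_union] at hx
    rcases hx with rfl | hx | hx
    · simp
    · simp only [Finset.mem_image, Finset.mem_univ, true_and] at hx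
      obtain ⟨s, rfl⟩ := hx
      have := congrFun hmul s
      simpa [Matrix.mulVec, dotProduct, mul_comm, mul_assoc, mul_left_comm]
        using this
    · rw [Finset.mem_sdiff] at hx
      refine Finset.sum_eq_zero fun t _ => ?_
      have hxe : x ∈ I.erase (c t) := by
        refine Finset.mem_erase.mpr ⟨?_, hx.1⟩
        intro h
        exact hx.2 (Finset.mem_image.mpr ⟨t, Finset.mem_univ t, h.symm⟩)
      rw [Finset.prod_eq_zero hxe (by ring)]
      ring
  -- conclude Q = 0
  have hQ0 : Q = 0 :=
    Polynomial.eq_zero_of_natDegree_lt_card_of_eval_eq_zero' Q S hroot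
      (lt_of_le_of_lt hdeg (by omega))
  -- evaluate at c t to get v t = 0
  apply hv
  funext t
  have := hQeval (c t)
  rw [hQ0] at this
  simp only [Polynomial.eval_zero] at this
  have hsum : ∑ t' : Fin m, v t' * (c t * ∏ ℓ ∈ I.erase (c t'), (c t - ℓ))
      = v t * (c t * ∏ ℓ ∈ I.erase (c t), (c t - ℓ)) := by
    refine Finset.sum_eq_single t (fun t' _ ht' => ?_) (by simp)
    have hmem : c t ∈ I.erase (c t') :=
      Finset.mem_erase.mpr ⟨fun h => ht' (hc h).symm, hcI t⟩
    rw [Finset.prod_eq_zero hmem (by ring)]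
    ring
  rw [hsum] at this
  have hne : c t * ∏ ℓ ∈ I.erase (c t), (c t - ℓ) ≠ 0 := by
    refine mul_ne_zero (hI0 _ (hcI t)) (Finset.prod_ne_zero_iff.mpr fun ℓ hℓ => ?_)
    have := (Finset.mem_erase.mp hℓ).1
    intro h
    exact this (sub_eq_zero.mp h).symm
  have := (mul_eq_zero.mp (this.symm)).resolve_right hne
  simpa using this
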